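/- arXiv:1906.03439 — 2 statements merged into one kernel-verified Lean document; each statement's English description precedes it below -/
import Mathlib

section
/- Let A be a real symmetric m×m matrix with λ_min(A) ≥ -K/2 for K ≥ 0, and let h > 0 with h²K ≤ 2. Then ‖(I + (h²/2)A)^{-1}(I - (h²/2)A)‖ ≤ 1 + h²K, where ‖·‖ is the operator norm induced by the Euclidean norm. -/
open Matrix

set_option maxHeartbeats 2000000 in
set_option synthInstance.maxHeartbeats 400000 in
theorem stmt_1 {m : ℕ} (A : Matrix (Fin m) (Fin m) ℝ) (hA : A.IsHermitian)
    (K h : ℝ) (hK : 0 ≤ K) (hh : 0 < h)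
    (hEig : ∀ i, -(K / 2) ≤ hA.eigenvalues i)
    (hhK : h ^ 2 * K ≤ 2) :
    ‖Matrix.toEuclideanCLM (𝕜 := ℝ) (n := Fin m)
        ((1 + (h ^ 2 / 2) • A)⁻¹ * (1 - (h ^ 2 / 2) • A))‖ ≤ 1 + h ^ 2 * K := by
  set c : ℝ := h ^ 2 / 2 with hc
  set ev : Fin m → ℝ := hA.eigenvalues with hev
  set r : ℝ := 1 + h ^ 2 * K with hr
  have hh2 : (0:ℝ) < h ^ 2 := by positivity
  set p : Fin m → ℝ := fun i => 1 + c * ev i with hpdef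
  set q : Fin m → ℝ := fun i => 1 - c * ev i with hqdef
  have hp : ∀ i, 0 < p i := by
    intro i
    have h1 := mul_le_mul_of_nonneg_left (hEig i) (le_of_lt hh2)
    simp only [hpdef, hc]
    nlinarith
  set g : Fin m → ℝ := fun i => (p i)⁻¹ * q i with hgdef
  have hg : ∀ i, |g i| ≤ r := by
    intro i
    have hpi := hp i
    have hqr : |q i| ≤ r * p i := by
      have h1 := mul_le_mul_of_nonneg_left (hEig i) (le_of_lt hh2)
      rcases abs_cases (q i) with ⟨he, _⟩ | ⟨he, _⟩ <;> rw [he] <;>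
        simp only [hpdef, hqdef, hr, hc] <;> nlinarith [mul_nonneg (le_of_lt hh2) hK,
          mul_le_mul_of_nonneg_left hhK (mul_nonneg (le_of_lt hh2) hK)]
    have : |g i| = (p i)⁻¹ * |q i| := by
      rw [hgdef, abs_mul, abs_inv, abs_of_pos hpi]
    rw [this, inv_mul_le_iff₀ hpi]
    calc |q i| ≤ r * p i := hqr
      _ = p i * r := mul_comm _ _
  set U : Matrix (Fin m) (Fin m) ℝ := (hA.eigenvectorUnitary : Matrix (Fin m) (Fin m) ℝ) with hUdef
  have hU1 : star U * U = 1 := Unitary.coe_star_mul_self hA.eigenvectorUnitary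
  have hU2 : U * star U = 1 := Unitary.coe_mul_star_self hA.eigenvectorUnitary
  have hDiag : diagonal (RCLike.ofReal ∘ hA.eigenvalues) = diagonal ev := by
    simp [hev]
  have hspec : A = U * diagonal ev * star U := by
    conv_lhs => rw [hA.spectral_theorem]
    rw [hDiag]
    rfl
  have hdp : diagonal p = 1 + c • diagonal ev := by
    ext i j
    by_cases hij : i = j <;>
      simp [hij, diagonal_apply, Matrix.one_apply, hpdef]
  have hdq : diagonal q = 1 - c • diagonal ev := by
    ext i j
    by_cases hij : i = j <;>
      simp [hij, diagonal_apply, Matrix.one_apply, hqdef]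
  have hB : 1 + c • A = U * diagonal p * star U := by
    rw [hdp, mul_add, mul_one, add_mul, hU2, Matrix.mul_smul, Matrix.smul_mul, ← hspec]
  have hC : 1 - c • A = U * diagonal q * star U := by
    rw [hdq, mul_sub, mul_one, sub_mul, hU2, Matrix.mul_smul, Matrix.smul_mul, ← hspec]
  have hBinv : (1 + c • A)⁻¹ = U * diagonal (fun i => (p i)⁻¹) * star U := by
    apply inv_eq_right_inv
    rw [hB]
    calc U * diagonal p * star U * (U * diagonal (fun i => (p i)⁻¹) * star U)
        = U * (diagonal p * (star U * U) * diagonal (fun i => (p i)⁻¹)) * star U := by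
          simp only [mul_assoc]
      _ = 1 := by
          rw [hU1, mul_one, diagonal_mul_diagonal]
          have : (fun i => p i * (p i)⁻¹) = fun _ => (1:ℝ) := by
            funext i; exact mul_inv_cancel₀ (hp i).ne'
          rw [this, diagonal_one, mul_one, hU2]
  have hM : (1 + c • A)⁻¹ * (1 - c • A) = U * diagonal g * star U := by
    rw [hBinv, hC]
    calc U * diagonal (fun i => (p i)⁻¹) * star U * (U * diagonal q * star U)
        = U * (diagonal (fun i => (p i)⁻¹) * (star U * U) * diagonal q) * star U := by
          simp only [mul_assoc]
      _ = U * diagonal g * star U := by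
          rw [hU1, mul_one, diagonal_mul_diagonal]
  rw [hM]
  set φ := Matrix.toEuclideanCLM (𝕜 := ℝ) (n := Fin m) with hφ
  have hmap : φ (U * diagonal g * star U) = φ U * φ (diagonal g) * star (φ U) := by
    rw [_root_.map_mul, _root_.map_mul, map_star]
  have hnormU : ‖φ U‖ ≤ 1 := by
    have h1 : star (φ U) * φ U = 1 := by
      rw [← map_star, ← _root_.map_mul, hU1, _root_.map_one]
    have h2 : ‖star (φ U) * φ U‖ = ‖φ U‖ * ‖φ U‖ := by
      rw [ContinuousLinearMap.star_eq_adjoint]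
      exact ContinuousLinearMap.norm_adjoint_comp_self (φ U)
    have h3 : ‖(1 : EuclideanSpace ℝ (Fin m) →L[ℝ] EuclideanSpace ℝ (Fin m))‖ ≤ 1 :=
      ContinuousLinearMap.norm_id_le
    rw [h1] at h2
    nlinarith [norm_nonneg (φ U)]
  have hr0 : (0:ℝ) ≤ r := by rw [hr]; nlinarith
  have hnormD : ‖φ (diagonal g)‖ ≤ r := by
    apply ContinuousLinearMap.opNorm_le_bound _ hr0
    intro x
    have hx : φ (diagonal g) x =
        (WithLp.equiv _ _).symm (diagonal g *ᵥ (WithLp.equiv _ _ x)) := by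
      conv_lhs => rw [← (WithLp.equiv _ _).symm_apply_apply x]
      rw [hφ, WithLp.equiv_symm_apply, toEuclideanCLM_toLp]
    rw [hx]
    rw [EuclideanSpace.norm_eq, EuclideanSpace.norm_eq]
    have hsum : ∑ i, ‖(WithLp.equiv 2 (Fin m → ℝ)).symm
          (diagonal g *ᵥ (WithLp.equiv 2 (Fin m → ℝ)) x) i‖ ^ 2
        ≤ r ^ 2 * ∑ i, ‖x i‖ ^ 2 := by
      rw [Finset.mul_sum]
      apply Finset.sum_le_sum
      intro i _
      have : (WithLp.equiv 2 (Fin m → ℝ)).symm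
          (diagonal g *ᵥ (WithLp.equiv 2 (Fin m → ℝ)) x) i
          = g i * x i := by
        simp [Matrix.mulVec_diagonal]
      rw [this]
      have h1 : |g i * x i| ≤ r * |x i| := by
        rw [abs_mul]
        exact mul_le_mul_of_nonneg_right (hg i) (abs_nonneg _)
      have h2 : ‖g i * x i‖ = |g i * x i| := rfl
      have h3 : ‖x i‖ = |x i| := rfl
      rw [h2, h3]
      calc |g i * x i| ^ 2 ≤ (r * |x i|) ^ 2 := by
            apply pow_le_pow_left₀ (abs_nonneg _) h1
        _ = r ^ 2 * |x i| ^ 2 := by ring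
    calc Real.sqrt (∑ i, ‖(WithLp.equiv 2 (Fin m → ℝ)).symm
          (diagonal g *ᵥ (WithLp.equiv 2 (Fin m → ℝ)) x) i‖ ^ 2)
        ≤ Real.sqrt (r ^ 2 * ∑ i, ‖x i‖ ^ 2) := Real.sqrt_le_sqrt hsum
      _ = r * Real.sqrt (∑ i, ‖x i‖ ^ 2) := by
          rw [Real.sqrt_mul (sq_nonneg r), Real.sqrt_sq hr0]
  calc ‖φ (U * diagonal g * star U)‖
      = ‖φ U * φ (diagonal g) * star (φ U)‖ := by rw [hmap]
    _ ≤ ‖φ U * φ (diagonal g)‖ * ‖star (φ U)‖ := norm_mul_le _ _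
    _ ≤ ‖φ U‖ * ‖φ (diagonal g)‖ * ‖star (φ U)‖ := by
        apply mul_le_mul_of_nonneg_right (norm_mul_le _ _) (norm_nonneg _)
    _ = ‖φ U‖ * ‖φ (diagonal g)‖ * ‖φ U‖ := by
        have hst : ‖star (φ U)‖ = ‖φ U‖ := by
          rw [ContinuousLinearMap.star_eq_adjoint]
          exact ContinuousLinearMap.adjoint.norm_map _
        rw [hst]
    _ ≤ 1 * r * 1 := by
        apply mul_le_mul (mul_le_mul hnormU hnormD (norm_nonneg _) zero_le_one)
          hnormU (norm_nonneg _) (by positivity)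
    _ = r := by ring
end

section
/- Let B be a real symmetric positive definite m×m matrix. Then its smallest eigenvalue satisfies λ_min(B) ≥ det(B) · ((m-1)/‖B‖_F²)^{(m-1)/2} for m ≥ 2, where ‖B‖_F denotes the Frobenius norm. -/
open Matrix

theorem stmt_6 {m : ℕ} (hm : 2 ≤ m) (B : Matrix (Fin m) (Fin m) ℝ) (hB : B.PosDef) :
    B.det * (((m : ℝ) - 1) / (∑ i, ∑ j, B i j ^ 2)) ^ (((m : ℝ) - 1) / 2) ≤
      ⨅ i, hB.1.eigenvalues i := by
  classical
  set lam := hB.1.eigenvalues with hlam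
  have hpos : ∀ j, 0 < lam j := fun j => hB.eigenvalues_pos j
  -- determinant = product of eigenvalues
  have hdet : B.det = ∏ j, lam j := by
    simpa using hB.1.det_eq_prod_eigenvalues
  -- sum of squares of entries = sum of squares of eigenvalues
  set U : Matrix (Fin m) (Fin m) ℝ := (hB.1.eigenvectorUnitary : Matrix (Fin m) (Fin m) ℝ)
    with hU
  have hUU : star U * U = 1 := by
    simpa [hU] using (Matrix.mem_unitaryGroup_iff').mp (hB.1.eigenvectorUnitary).2
  have hspec : B = U * diagonal (RCLike.ofReal ∘ lam) * star U := hB.1.spectral_theorem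
  have hBB : B * B = U * diagonal (fun j => lam j ^ 2) * star U := by
    rw [hspec]
    have : diagonal (RCLike.ofReal ∘ lam) * diagonal (RCLike.ofReal ∘ lam)
        = diagonal (fun j => lam j ^ 2) := by
      rw [diagonal_mul_diagonal]
      funext j
      simp [sq]
    calc (U * diagonal (RCLike.ofReal ∘ lam) * star U) *
          (U * diagonal (RCLike.ofReal ∘ lam) * star U)
        = U * diagonal (RCLike.ofReal ∘ lam) * (star U * U) * diagonal (RCLike.ofReal ∘ lam)
          * star U := by noncomm_ring
      _ = U * diagonal (fun j => lam j ^ 2) * star U := by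
          rw [hUU, mul_one, mul_assoc U _ _, this]
  have htr : ∑ i, ∑ j, B i j ^ 2 = ∑ j, lam j ^ 2 := by
    have hsym : ∀ i j, B j i = B i j := by
      intro i j
      have := congrFun (congrFun hB.1.symm j) i
      simpa [Matrix.conjTranspose_apply] using this
    have h1 : ∑ i, ∑ j, B i j ^ 2 = (B * B).trace := by
      simp only [Matrix.trace, Matrix.diag, Matrix.mul_apply]
      refine Finset.sum_congr rfl fun i _ => Finset.sum_congr rfl fun j _ => ?_
      rw [sq, hsym i j]
    rw [h1, hBB, Matrix.trace_mul_cycle, hUU, one_mul, trace_diagonal]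
  set S : ℝ := ∑ j, lam j ^ 2 with hSdef
  haveI hne : Nonempty (Fin m) := ⟨⟨0, by omega⟩⟩
  have hSpos : 0 < S := by
    refine Finset.sum_pos (fun j _ => pow_pos (hpos j) 2) ⟨⟨0, by omega⟩, Finset.mem_univ _⟩
  rw [htr, hdet]
  -- reduce to a bound for each eigenvalue
  refine le_ciInf fun i => ?_
  set n : ℕ := m - 1 with hn
  have hncast : (n : ℝ) = (m : ℝ) - 1 := by
    have : (1 : ℕ) ≤ m := by omega
    push_cast [hn, Nat.cast_sub this]
    ring
  have hnpos : (0 : ℝ) < n := by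
    have : 1 ≤ n := by omega
    exact_mod_cast Nat.lt_of_lt_of_le Nat.zero_lt_one this
  set e : Finset (Fin m) := Finset.univ.erase i with he
  have hcard : e.card = n := by
    rw [he, Finset.card_erase_of_mem (Finset.mem_univ i), Finset.card_univ, Fintype.card_fin]
  set P : ℝ := ∏ j ∈ e, lam j with hP
  have hPpos : 0 < P := Finset.prod_pos fun j _ => hpos j
  have hprod : ∏ j, lam j = lam i * P := (Finset.mul_prod_erase _ _ (Finset.mem_univ i)).symm
  -- AM-GM : P ≤ (S / n) ^ (n / 2)
  have hSn : (0 : ℝ) < S / n := div_pos hSpos hnpos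
  have amgm : (P ^ 2 : ℝ) ^ ((1 : ℝ) / n) ≤ S / n := by
    have h := Real.geom_mean_le_arith_mean_weighted e (fun _ => (1 : ℝ) / n)
      (fun j => lam j ^ 2) (fun j _ => by positivity)
      (by rw [Finset.sum_const, hcard, nsmul_eq_mul, mul_one_div, div_self hnpos.ne'])
      (fun j _ => by positivity)
    have hL : ∏ j ∈ e, (lam j ^ 2 : ℝ) ^ ((1 : ℝ) / n) = (P ^ 2 : ℝ) ^ ((1 : ℝ) / n) := by
      rw [Real.finset_prod_rpow e _ (fun j _ => by positivity), hP, Finset.prod_pow]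
    have hR : ∑ j ∈ e, (1 : ℝ) / n * lam j ^ 2 ≤ S / n := by
      have hsub : ∑ j ∈ e, lam j ^ 2 ≤ S :=
        Finset.sum_le_sum_of_subset_of_nonneg (Finset.subset_univ e)
          (fun j _ _ => by positivity)
      calc ∑ j ∈ e, (1 : ℝ) / n * lam j ^ 2 = (∑ j ∈ e, lam j ^ 2) / n := by
            rw [← Finset.mul_sum]; ring
        _ ≤ S / n := by gcongr
    calc (P ^ 2 : ℝ) ^ ((1 : ℝ) / n) = ∏ j ∈ e, (lam j ^ 2 : ℝ) ^ ((1 : ℝ) / n) := hL.symm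
      _ ≤ ∑ j ∈ e, (1 : ℝ) / n * lam j ^ 2 := h
      _ ≤ S / n := hR
  have hPbound : P ≤ (S / n) ^ ((n : ℝ) / 2) := by
    have h2 : (((P ^ 2 : ℝ) ^ ((1 : ℝ) / n)) ^ ((n : ℝ) / 2)) ≤ (S / n) ^ ((n : ℝ) / 2) :=
      Real.rpow_le_rpow (Real.rpow_nonneg (by positivity) _) amgm (by positivity)
    have h3 : (((P ^ 2 : ℝ) ^ ((1 : ℝ) / n)) ^ ((n : ℝ) / 2)) = P := by
      rw [← Real.rpow_natCast P 2, ← Real.rpow_mul hPpos.le, ← Real.rpow_mul (by positivity)]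
      rw [show ((2 : ℕ) : ℝ) * (1 / (n : ℝ)) * ((n : ℝ) / 2) = 1 from by
        push_cast; field_simp]
      exact Real.rpow_one P
    rwa [h3] at h2
  -- put things together
  have hrw : (((m : ℝ) - 1) / S) ^ (((m : ℝ) - 1) / 2) = ((S / n) ^ ((n : ℝ) / 2))⁻¹ := by
    rw [← hncast, ← Real.inv_rpow hSn.le, inv_div]
  rw [hprod, hrw]
  have hQpos : (0 : ℝ) < (S / n) ^ ((n : ℝ) / 2) := Real.rpow_pos_of_pos hSn _
  calc lam i * P * ((S / n) ^ ((n : ℝ) / 2))⁻¹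
      ≤ lam i * (S / n) ^ ((n : ℝ) / 2) * ((S / n) ^ ((n : ℝ) / 2))⁻¹ := by
        have := mul_le_mul_of_nonneg_left hPbound (hpos i).le
        exact mul_le_mul_of_nonneg_right this (by positivity)
    _ = lam i := by field_simp
end
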